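/- Let H be a finite-dimensional complex Hilbert space, let Y be a finite set equipped with its power-set σ-algebra, let P be a PV measure on Y, let M be a POV measure on a measurable space (X, 𝒜), and let ν be a weak Markov kernel with respect to M such that P = ν∘M. Then there exists a measurable function f : X → Y such that P(B) = M(f⁻¹(B)) for every B ⊆ Y. -/

import Mathlib

open MeasureTheory ComplexOrder
open scoped Classical

noncomputable section

variable {H : Type*} [NormedAddCommGroup H] [InnerProductSpace ℂ H] [CompleteSpace H]

/-- A (normalized) positive operator valued measure on the measurable space `X`:
`0 ≤ M A ≤ 1`, `M ∅ = 0`, `M univ = 1`, and `M` is weakly σ-additive. -/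
structure IsPOVM {X : Type*} [MeasurableSpace X] (M : Set X → (H →L[ℂ] H)) : Prop where
  pos : ∀ A : Set X, MeasurableSet A → (M A).IsPositive
  le_one : ∀ A : Set X, MeasurableSet A → ((1 : H →L[ℂ] H) - M A).IsPositive
  empty : M ∅ = 0
  univ : M Set.univ = 1
  m_iUnion : ∀ (ψ : H) (A : ℕ → Set X), (∀ n, MeasurableSet (A n)) →
    Pairwise (Function.onFun Disjoint A) →
    HasSum (fun n => (inner ℂ ψ (M (A n) ψ) : ℂ)) (inner ℂ ψ (M (⋃ n, A n) ψ))

/-- A projection valued (PV) measure: a POV measure whose values are orthogonal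
projections (self-adjointness is part of positivity). -/
def IsPVM {X : Type*} [MeasurableSpace X] (M : Set X → (H →L[ℂ] H)) : Prop :=
  IsPOVM M ∧ ∀ A : Set X, MeasurableSet A → M A * M A = M A

/-- The finite measure `μ_ψ^M (A) = ⟨ψ, M(A) ψ⟩` associated to a POV measure `M`
and a vector `ψ`. (Junk value `0` if `M` is not a POV measure.) -/
def vecMeasure {X : Type*} [MeasurableSpace X] (M : Set X → (H →L[ℂ] H)) (ψ : H) :
    Measure X :=
  if hM : IsPOVM M then
    Measure.ofMeasurable (fun A _ => ENNReal.ofReal (inner ℂ ψ (M A ψ) : ℂ).re)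
      (by simp [hM.empty])
      (by
        intro A hA hd
        have h := hM.m_iUnion ψ A hA hd
        have hre : HasSum (fun n => ((inner ℂ ψ (M (A n) ψ) : ℂ)).re)
            ((inner ℂ ψ (M (⋃ n, A n) ψ) : ℂ)).re := h.mapL Complex.reCLM
        have hnn : ∀ n, 0 ≤ ((inner ℂ ψ (M (A n) ψ) : ℂ)).re := by
          intro n
          have h2 := (hM.pos (A n) (hA n)).2 ψ
          rw [ContinuousLinearMap.reApplyInnerSelf] at h2
          simpa [inner_re_symm] using h2
        try dsimp only
        rw [← hre.tsum_eq]
        exact ENNReal.ofReal_tsum_of_nonneg hnn hre.summable)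
  else 0

/-- `ν : X × ℬ → ℝ` is a weak Markov kernel with respect to the POV measure `M`. -/
def IsWeakMarkovKernel {X Y : Type*} [MeasurableSpace X] [MeasurableSpace Y]
    (M : Set X → (H →L[ℂ] H)) (ν : X → Set Y → ℝ) : Prop :=
  (∀ B : Set Y, MeasurableSet B → Measurable fun x => ν x B) ∧
  ∀ ψ : H,
    (∀ B : Set Y, MeasurableSet B →
      ∀ᵐ x ∂(vecMeasure M ψ), 0 ≤ ν x B ∧ ν x B ≤ 1) ∧
    (∀ᵐ x ∂(vecMeasure M ψ), ν x Set.univ = 1) ∧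
    (∀ᵐ x ∂(vecMeasure M ψ), ν x ∅ = 0) ∧
    (∀ B : ℕ → Set Y, (∀ n, MeasurableSet (B n)) → Pairwise (Function.onFun Disjoint B) →
      ∀ᵐ x ∂(vecMeasure M ψ), HasSum (fun n => ν x (B n)) (ν x (⋃ n, B n)))

/-- `F = ν ∘ M` : the POV measure `F` is the smearing of `M` with respect to `ν`. -/
def IsSmearing {X Y : Type*} [MeasurableSpace X] [MeasurableSpace Y]
    (M : Set X → (H →L[ℂ] H)) (ν : X → Set Y → ℝ) (F : Set Y → (H →L[ℂ] H)) : Prop :=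
  ∀ B : Set Y, MeasurableSet B → ∀ ψ : H,
    (inner ℂ ψ (F B ψ) : ℂ) = ((∫ x, ν x B ∂(vecMeasure M ψ) : ℝ) : ℂ)

/-- A weak Markov kernel has values in `{0,1}`. -/
def HasZeroOneValues {X Y : Type*} [MeasurableSpace X] [MeasurableSpace Y]
    (M : Set X → (H →L[ℂ] H)) (ν : X → Set Y → ℝ) : Prop :=
  ∀ B : Set Y, MeasurableSet B → ∀ ψ : H,
    ∀ᵐ x ∂(vecMeasure M ψ), ν x B = 0 ∨ ν x B = 1




section Aux

set_option synthInstance.maxHeartbeats 1000000 in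
lemma pos_apply_eq_zero (T : H →L[ℂ] H) (hT : T.IsPositive) (x : H)
    (hx : (inner ℂ x (T x) : ℂ) = 0) : T x = 0 := by
  have h0 : (0 : H →L[ℂ] H) ≤ T := (ContinuousLinearMap.nonneg_iff_isPositive T).mpr hT
  set S := CFC.sqrt T with hS
  have hSnn : (0 : H →L[ℂ] H) ≤ S := CFC.sqrt_nonneg T
  have hmul : S * S = T := CFC.sqrt_mul_sqrt_self T h0
  have hSsa : ContinuousLinearMap.adjoint S = S :=
    (ContinuousLinearMap.isSelfAdjoint_iff').mp (IsSelfAdjoint.of_nonneg hSnn)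
  have h1 : (inner ℂ x (S (S x)) : ℂ) = 0 := by rw [← hmul] at hx; exact hx
  have h2 : (inner ℂ (S x) (S x) : ℂ) = 0 := by
    rw [← ContinuousLinearMap.adjoint_inner_right S x (S x), hSsa]; exact h1
  have hSx : S x = 0 := by simpa [inner_self_eq_zero] using h2
  calc T x = S (S x) := by rw [← hmul]; rfl
  _ = 0 := by rw [hSx]; simp

lemma inner_self_real (T : H →L[ℂ] H) (hT : IsSelfAdjoint T) (ψ : H) :
    (inner ℂ ψ (T ψ) : ℂ) = (((inner ℂ ψ (T ψ) : ℂ)).re : ℂ) := by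
  have hsym := (ContinuousLinearMap.isSelfAdjoint_iff_isSymmetric.mp hT) ψ ψ
  -- hsym : ⟪T ψ, ψ⟫ = ⟪ψ, T ψ⟫
  have hconj : (starRingEnd ℂ) (inner ℂ ψ (T ψ) : ℂ) = (inner ℂ ψ (T ψ) : ℂ) := by
    rw [inner_conj_symm]; exact hsym
  exact (Complex.conj_eq_iff_re.mp hconj).symm

variable {X Y : Type*} [MeasurableSpace X] [MeasurableSpace Y]
variable {M : Set X → (H →L[ℂ] H)} {ν : X → Set Y → ℝ}

lemma vecMeasure_apply (hM : IsPOVM M) (ψ : H) {A : Set X} (hA : MeasurableSet A) :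
    vecMeasure M ψ A = ENNReal.ofReal ((inner ℂ ψ (M A ψ) : ℂ)).re := by
  rw [vecMeasure, dif_pos hM]; exact Measure.ofMeasurable_apply A hA

lemma re_inner_nonneg (hM : IsPOVM M) {A : Set X} (hA : MeasurableSet A) (ψ : H) :
    0 ≤ ((inner ℂ ψ (M A ψ) : ℂ)).re := by
  have h2 := (hM.pos A hA).2 ψ
  rw [ContinuousLinearMap.reApplyInnerSelf] at h2
  simpa [inner_re_symm] using h2

instance vecMeasure_finite (M : Set X → (H →L[ℂ] H)) (ψ : H) :
    IsFiniteMeasure (vecMeasure M ψ) := by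
  constructor
  by_cases hM : IsPOVM M
  · rw [vecMeasure_apply hM ψ MeasurableSet.univ]; exact ENNReal.ofReal_lt_top
  · rw [vecMeasure, dif_neg hM]; simp

lemma integrable_nu (hν : IsWeakMarkovKernel M ν) {B : Set Y} (hB : MeasurableSet B) (ψ : H) :
    Integrable (fun x => ν x B) (vecMeasure M ψ) := by
  refine (integrable_const (1 : ℝ)).mono' ((hν.1 B hB).aestronglyMeasurable) ?_
  filter_upwards [(hν.2 ψ).1 B hB] with x hx
  rw [Real.norm_eq_abs, abs_le]
  exact ⟨by linarith [hx.1], hx.2⟩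

lemma ae_eq_one (hM : IsPOVM M) (hν : IsWeakMarkovKernel M ν)
    {P : Set Y → (H →L[ℂ] H)} (hs : IsSmearing M ν P) {B : Set Y} (hB : MeasurableSet B)
    (φ : H) (h : (inner ℂ φ (P B φ) : ℂ) = (inner ℂ φ φ : ℂ)) :
    ∀ᵐ x ∂(vecMeasure M φ), ν x B = 1 := by
  have hsm := hs B hB φ
  rw [h] at hsm
  have hint : ∫ x, ν x B ∂(vecMeasure M φ) = ‖φ‖ ^ 2 := by
    have h2 : ((‖φ‖ ^ 2 : ℝ) : ℂ) = ((∫ x, ν x B ∂(vecMeasure M φ) : ℝ) : ℂ) := by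
      rw [← hsm, inner_self_eq_norm_sq_to_K]; norm_cast
    exact_mod_cast h2.symm
  have hgint : Integrable (fun x => 1 - ν x B) (vecMeasure M φ) :=
    (integrable_const 1).sub (integrable_nu hν hB φ)
  have hge : 0 ≤ᵐ[vecMeasure M φ] fun x => 1 - ν x B := by
    filter_upwards [(hν.2 φ).1 B hB] with x hx
    simp only [Pi.zero_apply]; linarith [hx.2]
  have hμuniv : ((vecMeasure M φ) Set.univ).toReal = ‖φ‖ ^ 2 := by
    have h1 : (inner ℂ φ ((M Set.univ) φ) : ℂ) = ((‖φ‖ ^ 2 : ℝ) : ℂ) := by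
      rw [hM.univ]
      simp only [ContinuousLinearMap.one_apply]
      rw [inner_self_eq_norm_sq_to_K]; norm_cast
    rw [vecMeasure_apply hM φ MeasurableSet.univ, h1, Complex.ofReal_re,
      ENNReal.toReal_ofReal (sq_nonneg _)]
  have hg0 : ∫ x, (1 - ν x B) ∂(vecMeasure M φ) = 0 := by
    rw [integral_sub (integrable_const 1) (integrable_nu hν hB φ), hint,
      integral_const, smul_eq_mul, mul_one, measureReal_def, hμuniv, sub_self]
  have := (integral_eq_zero_iff_of_nonneg_ae hge hgint).mp hg0
  filter_upwards [this] with x hx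
  have : 1 - ν x B = 0 := hx
  linarith

lemma ae_eq_zero (hM : IsPOVM M) (hν : IsWeakMarkovKernel M ν)
    {P : Set Y → (H →L[ℂ] H)} (hs : IsSmearing M ν P) {B : Set Y} (hB : MeasurableSet B)
    (φ : H) (h : (inner ℂ φ (P B φ) : ℂ) = 0) :
    ∀ᵐ x ∂(vecMeasure M φ), ν x B = 0 := by
  have hsm := hs B hB φ
  rw [h] at hsm
  have hint : ∫ x, ν x B ∂(vecMeasure M φ) = 0 := by exact_mod_cast hsm.symm
  have hge : 0 ≤ᵐ[vecMeasure M φ] fun x => ν x B := by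
    filter_upwards [(hν.2 φ).1 B hB] with x hx
    simpa using hx.1
  have := (integral_eq_zero_iff_of_nonneg_ae hge (integrable_nu hν hB φ)).mp hint
  filter_upwards [this] with x hx
  exact hx

lemma ae_zero_or_one (hM : IsPOVM M) (hν : IsWeakMarkovKernel M ν)
    {P : Set Y → (H →L[ℂ] H)} (hP : IsPVM P) (hs : IsSmearing M ν P)
    {B : Set Y} (hB : MeasurableSet B) (ψ : H) :
    ∀ᵐ x ∂(vecMeasure M ψ), ν x B = 0 ∨ ν x B = 1 := by
  set T := P B with hT
  have hTT : T * T = T := hP.2 B hB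
  have hcomp : ∀ z : H, T (T z) = T z := by
    intro z
    conv_rhs => rw [← hTT]
    rfl
  have h1 : (inner ℂ (T ψ) (T (T ψ)) : ℂ) = (inner ℂ (T ψ) (T ψ) : ℂ) := by rw [hcomp]
  have h2 : (inner ℂ (ψ - T ψ) (T (ψ - T ψ)) : ℂ) = 0 := by
    have hz : T (ψ - T ψ) = 0 := by rw [map_sub, hcomp, sub_self]
    rw [hz, inner_zero_right]
  have a1 : ∀ᵐ x ∂(vecMeasure M (T ψ)), ν x B = 1 := ae_eq_one hM hν hs hB (T ψ) h1
  have a2 : ∀ᵐ x ∂(vecMeasure M (ψ - T ψ)), ν x B = 0 := ae_eq_zero hM hν hs hB (ψ - T ψ) h2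
  set E := {x : X | ¬(ν x B = 0 ∨ ν x B = 1)} with hE
  have hEm : MeasurableSet E := by
    have h01 : MeasurableSet ({0, 1} : Set ℝ) :=
      (measurableSet_singleton 0).union (measurableSet_singleton 1)
    have h := (hν.1 B hB) h01.compl
    have heq : E = (fun x => ν x B) ⁻¹' (({0, 1} : Set ℝ)ᶜ) := by
      ext x; simp [hE]
    rw [heq]; exact h
  have hE1 : vecMeasure M (T ψ) E = 0 := by
    rw [ae_iff] at a1
    refine measure_mono_null ?_ a1
    intro x hx
    simp only [hE, Set.mem_setOf_eq] at hx ⊢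
    tauto
  have hE2 : vecMeasure M (ψ - T ψ) E = 0 := by
    rw [ae_iff] at a2
    refine measure_mono_null ?_ a2
    intro x hx
    simp only [hE, Set.mem_setOf_eq] at hx ⊢
    tauto
  have key : ∀ φ : H, vecMeasure M φ E = 0 → M E φ = 0 := by
    intro φ hφ
    rw [vecMeasure_apply hM φ hEm, ENNReal.ofReal_eq_zero] at hφ
    have hre : ((inner ℂ φ (M E φ) : ℂ)).re = 0 :=
      le_antisymm hφ (re_inner_nonneg hM hEm φ)
    have : (inner ℂ φ (M E φ) : ℂ) = 0 := by
      rw [inner_self_real (M E) (hM.pos E hEm).isSelfAdjoint φ, hre, Complex.ofReal_zero]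
    exact pos_apply_eq_zero (M E) (hM.pos E hEm) φ this
  have z1 : M E (T ψ) = 0 := key _ hE1
  have z2 : M E (ψ - T ψ) = 0 := key _ hE2
  have hMEψ : M E ψ = 0 := by
    have hψ : ψ = T ψ + (ψ - T ψ) := by abel
    calc M E ψ = M E (T ψ + (ψ - T ψ)) := by rw [← hψ]
    _ = M E (T ψ) + M E (ψ - T ψ) := map_add _ _ _
    _ = 0 := by rw [z1, z2, add_zero]
  have hfin : vecMeasure M ψ E = 0 := by
    rw [vecMeasure_apply hM ψ hEm, hMEψ, inner_zero_right]
    simp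
  rw [ae_iff]
  exact hfin

lemma ae_sum [Fintype Y] (hν : IsWeakMarkovKernel M ν)
    (hpow : ∀ B : Set Y, MeasurableSet B) (B : Set Y) (ψ : H) :
    ∀ᵐ x ∂(vecMeasure M ψ),
      ν x B = ∑ y ∈ Finset.univ.filter (· ∈ B), ν x {y} := by
  classical
  set N := Fintype.card Y with hN
  set e := Fintype.equivFin Y with he
  set A : ℕ → Set Y := fun n => if h : n < N then ({e.symm ⟨n, h⟩} : Set Y) ∩ B else ∅ with hA
  have hmeas : ∀ n, MeasurableSet (A n) := fun n => hpow _
  have hdis : Pairwise (Function.onFun Disjoint A) := by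
    intro m n hmn
    unfold Function.onFun
    by_cases hm : m < N
    · by_cases hn : n < N
      · simp only [hA, dif_pos hm, dif_pos hn]
        refine Disjoint.mono Set.inter_subset_left Set.inter_subset_left ?_
        rw [Set.disjoint_singleton]
        intro hcontra
        have := e.symm.injective hcontra
        exact hmn (by simpa using this)
      · simp [hA, dif_neg hn]
    · simp [hA, dif_neg hm]
  have hUnion : (⋃ n, A n) = B := by
    ext y
    simp only [Set.mem_iUnion]
    constructor
    · rintro ⟨n, hn⟩
      simp only [hA] at hn
      by_cases h : n < N
      · rw [dif_pos h] at hn; exact hn.2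
      · rw [dif_neg h] at hn; exact absurd hn (Set.notMem_empty y)
    · intro hy
      refine ⟨(e y : ℕ), ?_⟩
      simp only [hA]
      rw [dif_pos (e y).isLt]
      exact ⟨by simp, hy⟩
  have hHS := (hν.2 ψ).2.2.2 A hmeas hdis
  have hvoid := (hν.2 ψ).2.2.1
  filter_upwards [hHS, hvoid] with x hx h0
  rw [hUnion] at hx
  have hzero : ∀ n ∉ Finset.range N, ν x (A n) = 0 := by
    intro n hn
    simp only [hA]
    rw [dif_neg (by simpa using hn)]
    exact h0
  have hBeq : ν x B = ∑ n ∈ Finset.range N, ν x (A n) :=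
    hx.unique (hasSum_sum_of_ne_finset_zero hzero)
  rw [hBeq, ← Fin.sum_univ_eq_sum_range (fun n => ν x (A n)) N]
  have hterm : ∀ i : Fin N, ν x (A (i : ℕ)) = ν x (({e.symm i} : Set Y) ∩ B) := by
    intro i
    simp only [hA]
    rw [dif_pos i.isLt]
  rw [Finset.sum_congr rfl (fun i _ => hterm i),
    Equiv.sum_comp e.symm (fun y => ν x (({y} : Set Y) ∩ B)), Finset.sum_filter]
  refine Finset.sum_congr rfl (fun y _ => ?_)
  by_cases hy : y ∈ B
  · rw [if_pos hy, Set.inter_eq_self_of_subset_left (Set.singleton_subset_iff.mpr hy)]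
  · rw [if_neg hy, Set.singleton_inter_eq_empty.mpr hy]
    exact h0

end Aux

/-- In finite dimension, a PV measure `P` on a finite set `Y`
(with the power-set σ-algebra) which is a smearing of a POV measure `M` is a
function of `M`. -/
theorem pv_on_finite_set_smearing_is_function
    [FiniteDimensional ℂ H] [Nontrivial H]
    {Y : Type*} [Fintype Y] [MeasurableSpace Y]
    (hpow : ∀ B : Set Y, MeasurableSet B)
    {X : Type*} [MeasurableSpace X]
    (P : Set Y → (H →L[ℂ] H)) (hP : IsPVM P)
    (M : Set X → (H →L[ℂ] H)) (hM : IsPOVM M)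
    (ν : X → Set Y → ℝ) (hν : IsWeakMarkovKernel M ν) (hs : IsSmearing M ν P) :
    ∃ f : X → Y, Measurable f ∧ ∀ B : Set Y, P B = M (f ⁻¹' B) := by
  classical
  -- Y is nonempty
  have hYne : Nonempty Y := by
    by_contra hempty
    rw [not_nonempty_iff] at hempty
    have h1 : (Set.univ : Set Y) = ∅ := Set.univ_eq_empty_iff.mpr hempty
    have h2 := hP.1.univ
    rw [h1, hP.1.empty] at h2
    obtain ⟨v, hv⟩ := exists_ne (0 : H)
    have := congrArg (fun T : H →L[ℂ] H => T v) h2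
    simp at this
    exact hv this.symm
  set N := Fintype.card Y with hNdef
  have hN : 0 < N := Fintype.card_pos
  set e := Fintype.equivFin Y with he
  -- the selector function
  set n : X → ℕ := fun x => ∑ y : Y, if ν x ({y} : Set Y) = 1 then (e y : ℕ) else 0 with hn
  have hnm : Measurable n := by
    apply Finset.measurable_sum
    intro y _
    exact Measurable.ite ((hν.1 {y} (hpow _)) (measurableSet_singleton 1))
      measurable_const measurable_const
  set f : X → Y := fun x => if h : n x < N then e.symm ⟨n x, h⟩ else e.symm ⟨0, hN⟩ with hf
  have hfm : Measurable f := by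
    have : f = (fun k : ℕ => if h : k < N then e.symm ⟨k, h⟩ else e.symm ⟨0, hN⟩) ∘ n := rfl
    rw [this]
    exact measurable_from_top.comp hnm
  refine ⟨f, hfm, ?_⟩
  intro B
  have hB := hpow B
  have hfB : MeasurableSet (f ⁻¹' B) := hfm hB
  have key : ∀ ψ : H, (inner ℂ ψ (P B ψ) : ℂ) = (inner ℂ ψ (M (f ⁻¹' B) ψ) : ℂ) := by
    intro ψ
    have h01 : ∀ᵐ x ∂(vecMeasure M ψ), ∀ y : Y, ν x ({y} : Set Y) = 0 ∨ ν x ({y} : Set Y) = 1 :=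
      ae_all_iff.mpr fun y => ae_zero_or_one hM hν hP hs (hpow {y}) ψ
    have hsumB := ae_sum hν hpow B ψ
    have hsumU := ae_sum hν hpow Set.univ ψ
    have huniv : ∀ᵐ x ∂(vecMeasure M ψ), ν x Set.univ = 1 := (hν.2 ψ).2.1
    have hind : ∀ᵐ x ∂(vecMeasure M ψ),
        ν x B = Set.indicator (f ⁻¹' B) (fun _ => (1 : ℝ)) x := by
      filter_upwards [h01, hsumB, hsumU, huniv] with x hx1 hxB hxU hxU1
      have htot : ∑ y : Y, ν x ({y} : Set Y) = 1 := by
        rw [← hxU1, hxU]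
        exact (Finset.sum_congr (by ext y; simp) (fun _ _ => rfl)).symm
      -- existence of a y₀ with value 1
      have hex : ∃ y₀ : Y, ν x ({y₀} : Set Y) = 1 := by
        by_contra hall
        push_neg at hall
        have : ∀ y : Y, ν x ({y} : Set Y) = 0 := by
          intro y
          rcases hx1 y with h | h
          · exact h
          · exact absurd h (hall y)
        rw [Finset.sum_congr rfl (fun y _ => this y)] at htot
        simp at htot
      obtain ⟨y₀, hy₀⟩ := hex
      have hnneg : ∀ y : Y, 0 ≤ ν x ({y} : Set Y) := by
        intro y
        rcases hx1 y with h | h <;> rw [h] <;> norm_num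
      have huniq : ∀ y : Y, y ≠ y₀ → ν x ({y} : Set Y) = 0 := by
        intro y hy
        rcases hx1 y with h | h
        · exact h
        · exfalso
          have hsub : ({y₀, y} : Finset Y) ⊆ Finset.univ := Finset.subset_univ _
          have hle : ∑ z ∈ ({y₀, y} : Finset Y), ν x ({z} : Set Y)
              ≤ ∑ z : Y, ν x ({z} : Set Y) :=
            Finset.sum_le_sum_of_subset_of_nonneg hsub (fun z _ _ => hnneg z)
          rw [Finset.sum_pair (Ne.symm hy), hy₀, h, htot] at hle
          linarith
      -- f x = y₀
      have hnx : n x = (e y₀ : ℕ) := by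
        simp only [hn]
        rw [Finset.sum_eq_single y₀]
        · rw [if_pos hy₀]
        · intro y _ hy
          rw [if_neg]
          rw [huniq y hy]
          norm_num
        · intro hnotmem
          exact absurd (Finset.mem_univ y₀) hnotmem
      have hfx : f x = y₀ := by
        rw [hf]
        simp only [hnx]
        rw [dif_pos (e y₀).isLt]
        simp
      by_cases hyB : y₀ ∈ B
      · have hmem : x ∈ f ⁻¹' B := by rw [Set.mem_preimage, hfx]; exact hyB
        rw [Set.indicator_of_mem hmem, hxB]
        rw [Finset.sum_eq_single_of_mem y₀ (by simp [hyB])]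
        · exact hy₀
        · intro y _ hy
          exact huniq y hy
      · have hmem : x ∉ f ⁻¹' B := by rw [Set.mem_preimage, hfx]; exact hyB
        rw [Set.indicator_of_notMem hmem, hxB]
        refine Finset.sum_eq_zero fun y hy => ?_
        refine huniq y fun hcontra => ?_
        rw [hcontra] at hy
        simp only [Finset.mem_filter] at hy
        exact hyB hy.2
    have hI : ∫ x, ν x B ∂(vecMeasure M ψ) = ((vecMeasure M ψ) (f ⁻¹' B)).toReal := by
      rw [integral_congr_ae hind]
      have : ∫ x, Set.indicator (f ⁻¹' B) (fun _ => (1 : ℝ)) x ∂(vecMeasure M ψ)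
          = ((vecMeasure M ψ) (f ⁻¹' B)).toReal := by
        rw [MeasureTheory.integral_indicator_const (1 : ℝ) hfB]
        simp [measureReal_def]
      exact this
    rw [hs B hB ψ, hI, vecMeasure_apply hM ψ hfB,
      ENNReal.toReal_ofReal (re_inner_nonneg hM hfB ψ)]
    exact (inner_self_real (M (f ⁻¹' B)) (hM.pos _ hfB).isSelfAdjoint ψ).symm
  -- conclude operator equality
  have hsub : ((P B - M (f ⁻¹' B) : H →L[ℂ] H) : H →ₗ[ℂ] H) = 0 := by
    rw [← inner_map_self_eq_zero]
    intro x
    have hx := key x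
    have : (inner ℂ ((P B - M (f ⁻¹' B)) x) x : ℂ) = 0 := by
      rw [ContinuousLinearMap.sub_apply, inner_sub_left, ← inner_conj_symm (P B x) x,
        ← inner_conj_symm (M (f ⁻¹' B) x) x, hx, sub_self]
    exact this
  have : (P B - M (f ⁻¹' B) : H →L[ℂ] H) = 0 := by
    ext z
    have := congrArg (fun T : H →ₗ[ℂ] H => T z) hsub
    simpa using this
  exact sub_eq_zero.mp this

end
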